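/- Define R̂⁻ = R̂ − (q−q⁻¹)·I + (q−q⁻¹)·K, where I is the identity and K^{kl}_{ij} = C^{ij}C_{kl}. Then R̂∘R̂⁻ = I = R̂⁻∘R̂, i.e., R̂⁻ is the two-sided inverse of R̂. -/

import Mathlib

open Matrix BigOperators

noncomputable section

/-- The standard `O_q(N)` exponents ρ_i; here `i : Fin N` is 0-based, so the
1-based index of the paper is `i.val + 1`. -/
def rho (N : ℕ) (i : Fin N) : ℝ :=
  if 2 * ((i : ℕ) + 1) < N + 1 then (N : ℝ) / 2 - ((i : ℕ) + 1)
  else if 2 * ((i : ℕ) + 1) = N + 1 then 0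
  else (N : ℝ) / 2 - ((i : ℕ) + 1) + 1

/-- The index map i ↦ i' = N+1−i (in 1-based indexing). -/
def pr {N : ℕ} (i : Fin N) : Fin N := i.rev

/-- The metric matrix C with entries C^{ij} = q^{−ρ_i} δ_{i,j'}. -/
def Cmat (q : ℝ) (N : ℕ) : Matrix (Fin N) (Fin N) ℝ :=
  fun i j => if j = pr i then Real.rpow q (-(rho N i)) else 0

/-- The matrix K with entries K^{kl}_{ij} = C^{ij} C_{kl}; the row index is (k,l),
the column index is (i,j), so that matrix multiplication realises the composition
(K²)^{kl}_{ij} = Σ_{m,n} K^{kl}_{mn} K^{mn}_{ij}. -/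
def Kmat (q : ℝ) (N : ℕ) : Matrix (Fin N × Fin N) (Fin N × Fin N) ℝ :=
  fun p r => Cmat q N r.1 r.2 * Cmat q N p.1 p.2

/-- The O_q(N) R-matrix R̂ with entries
R̂^{kl}_{ij} = q^{(k=l)−(k=l')}(i=l)(j=k) + (q−q⁻¹)(i<l)((i=k)(j=l) − K^{kl}_{ij});
row index p = (k,l), column index r = (i,j). -/
def Rhat (q : ℝ) (N : ℕ) : Matrix (Fin N × Fin N) (Fin N × Fin N) ℝ :=
  fun p r =>
    q ^ (((if p.1 = p.2 then 1 else 0) - (if p.1 = pr p.2 then 1 else 0) : ℤ)) *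
      (if r.1 = p.2 then 1 else 0) * (if r.2 = p.1 then 1 else 0)
    + (q - q⁻¹) * (if r.1 < p.2 then 1 else 0) *
      ((if r.1 = p.1 then 1 else 0) * (if r.2 = p.2 then 1 else 0) - Kmat q N p r)

/-- R̂⁻ = R̂ − (q−q⁻¹)·I + (q−q⁻¹)·K. -/
def Rm (q : ℝ) (N : ℕ) : Matrix (Fin N × Fin N) (Fin N × Fin N) ℝ :=
  Rhat q N - (q - q⁻¹) • (1 : Matrix (Fin N × Fin N) (Fin N × Fin N) ℝ)
    + (q - q⁻¹) • Kmat q N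

lemma pr_pr {N : ℕ} (i : Fin N) : pr (pr i) = i := Fin.rev_rev i
lemma pr_val {N : ℕ} (i : Fin N) : ((pr i : Fin N) : ℕ) + 1 = N - (i:ℕ) := by
  simp [pr, Fin.val_rev]; omega
lemma rho_rev (N : ℕ) (i : Fin N) : rho N (pr i) = -(rho N i) := by
  have hi : (i:ℕ) < N := i.isLt
  have hv := pr_val i
  have hc : (((pr i : Fin N) : ℕ) : ℝ) + 1 = (N:ℝ) - (i:ℕ) := by
    have h2 : ((N - (i:ℕ) : ℕ) : ℝ) = (N:ℝ) - (i:ℕ) := by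
      push_cast [Nat.cast_sub hi.le]; ring
    rw [← h2, ← hv]; push_cast; ring
  unfold rho
  split_ifs with h1 h2 h3 h4 h5 h6 <;> first
    | (exfalso; omega)
    | (rw [hc]; ring)
    | norm_num

def cc (q : ℝ) (N : ℕ) (i : Fin N) : ℝ := Real.rpow q (-(rho N i))

lemma cc_pos {q : ℝ} (hq : 0 < q) {N : ℕ} (i : Fin N) : 0 < cc q N i :=
  Real.rpow_pos_of_pos hq _

lemma cc_mul_rev {q : ℝ} (hq : 0 < q) {N : ℕ} (i : Fin N) :
    cc q N i * cc q N (pr i) = 1 := by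
  simp only [cc, Real.rpow_eq_pow, ← Real.rpow_add hq, rho_rev]
  simp

def csqExp (N : ℕ) (i : Fin N) : ℤ :=
  if 2 * ((i:ℕ) + 1) < N + 1 then 2*(i:ℤ) + 2 - N
  else if 2 * ((i:ℕ) + 1) = N + 1 then 0 else 2*(i:ℤ) - N

lemma cc_sq {q : ℝ} (hq : 0 < q) {N : ℕ} (i : Fin N) :
    cc q N i * cc q N i = q ^ (csqExp N i) := by
  simp only [cc, Real.rpow_eq_pow, ← Real.rpow_add hq]
  rw [← Real.rpow_intCast q (csqExp N i)]
  congr 1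
  unfold rho csqExp
  split_ifs with h1 h2 <;> push_cast <;> ring

def gExp (N t : ℕ) : ℤ := if 2*t + 2 ≤ N + 1 then 2*(t:ℤ) + 1 - N else 2*(t:ℤ) - N - 1
def gfun (q : ℝ) (N t : ℕ) : ℝ := q ^ (gExp N t)

def ccsq (q : ℝ) (N m : ℕ) : ℝ := if h : m < N then cc q N ⟨m,h⟩ * cc q N ⟨m,h⟩ else 0

lemma omega_id {q : ℝ} (hq : 0 < q) (e : ℤ) :
    (q - q⁻¹) * q ^ e = q ^ (e+1) - q ^ (e-1) := by
  have hqne : q ≠ 0 := ne_of_gt hq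
  rw [zpow_add₀ hqne, zpow_sub₀ hqne, zpow_one]
  field_simp

lemma H0 {q : ℝ} (hq : 0 < q) {E A B : ℤ} (h1 : A = E+1) (h2 : B = E-1) :
    (q - q⁻¹) * q ^ E = q ^ A - q ^ B + (q - q⁻¹) * (0:ℝ) := by
  rw [h1, h2, omega_id hq]; ring

lemma H1 {q : ℝ} (hq : 0 < q) {E A B : ℤ} (h1 : E = 0) (h2 : A = B) :
    (q - q⁻¹) * q ^ E = q ^ A - q ^ B + (q - q⁻¹) * (1:ℝ) := by
  rw [h1, h2]; simp

lemma tele_step {q : ℝ} (hq : 0 < q) {N : ℕ} (b : ℕ) (hb : b < N) :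
    (q - q⁻¹) * ccsq q N b
      = gfun q N (b+1) - gfun q N b
        + (q - q⁻¹) * (if 2*b + 1 ≤ N ∧ N ≤ 2*b + 2 then 1 else 0) := by
  rw [ccsq, dif_pos hb, cc_sq hq]
  unfold gfun gExp csqExp
  simp only [Fin.val_mk]
  split_ifs with h1 h2 h3 h4 h5 h6 h7 h8 h9 h10 h11 h12 <;>
    first
      | (exfalso; omega)
      | (refine H0 hq ?_ ?_ <;> push_cast <;> omega)
      | (refine H1 hq ?_ ?_ <;> push_cast <;> omega)

lemma tele {q : ℝ} (hq : 0 < q) {N : ℕ} (a b : ℕ) (hab : a ≤ b) (hbN : b ≤ N) :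
    (q - q⁻¹) * ∑ m ∈ Finset.Ico a b, ccsq q N m
      = gfun q N b - gfun q N a
        + (q - q⁻¹) * (if 2*a + 1 ≤ N ∧ N ≤ 2*b then 1 else 0) := by
  induction b, hab using Nat.le_induction with
  | base =>
      rw [Finset.Ico_self, Finset.sum_empty, if_neg (by omega)]
      ring
  | succ b hab ih =>
      rw [Finset.sum_Ico_succ_top hab, mul_add, ih (by omega),
        tele_step hq b (by omega)]
      have hsplit : (if 2*a + 1 ≤ N ∧ N ≤ 2*b then (1:ℝ) else 0)
          + (if 2*b + 1 ≤ N ∧ N ≤ 2*b + 2 then (1:ℝ) else 0)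
          = (if 2*a + 1 ≤ N ∧ N ≤ 2*(b+1) then (1:ℝ) else 0) := by
        split_ifs <;> first | (exfalso; omega) | norm_num
      calc gfun q N b - gfun q N a + (q - q⁻¹) * (if 2*a + 1 ≤ N ∧ N ≤ 2*b then (1:ℝ) else 0)
          + (gfun q N (b+1) - gfun q N b
              + (q - q⁻¹) * (if 2*b + 1 ≤ N ∧ N ≤ 2*b + 2 then (1:ℝ) else 0))
          = gfun q N (b+1) - gfun q N a
            + (q - q⁻¹) * ((if 2*a + 1 ≤ N ∧ N ≤ 2*b then (1:ℝ) else 0)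
                + (if 2*b + 1 ≤ N ∧ N ≤ 2*b + 2 then (1:ℝ) else 0)) := by ring
        _ = _ := by rw [hsplit]

def epsE {N : ℕ} (p : Fin N × Fin N) : ℤ :=
  (if p.1 = p.2 then 1 else 0) - (if p.1 = pr p.2 then 1 else 0)

lemma Rhat_apply (q : ℝ) {N : ℕ} (p r : Fin N × Fin N) :
    Rhat q N p r =
      q ^ (epsE p) * (if r.1 = p.2 then (1:ℝ) else 0) * (if r.2 = p.1 then (1:ℝ) else 0)
      + (q - q⁻¹) * (if r.1 < p.2 then (1:ℝ) else 0) *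
        ((if r.1 = p.1 then (1:ℝ) else 0) * (if r.2 = p.2 then (1:ℝ) else 0) - Kmat q N p r) := rfl

lemma Rm_apply (q : ℝ) {N : ℕ} (p r : Fin N × Fin N) :
    Rm q N p r =
      q ^ (epsE p) * (if r.1 = p.2 then (1:ℝ) else 0) * (if r.2 = p.1 then (1:ℝ) else 0)
      - (q - q⁻¹) * (if p.2 ≤ r.1 then (1:ℝ) else 0) *
        ((if r.1 = p.1 then (1:ℝ) else 0) * (if r.2 = p.2 then (1:ℝ) else 0) - Kmat q N p r) := by
  have h1 : (1 : Matrix (Fin N × Fin N) (Fin N × Fin N) ℝ) p r = if p = r then 1 else 0 :=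
    Matrix.one_apply
  simp only [Rm, Matrix.sub_apply, Matrix.add_apply, Matrix.smul_apply, h1, smul_eq_mul,
    Rhat_apply]
  have h2 : (if p = r then (1:ℝ) else 0) = (if r.1 = p.1 then (1:ℝ) else 0) * (if r.2 = p.2 then 1 else 0) := by
    rcases p with ⟨a,b⟩; rcases r with ⟨c,d⟩
    by_cases hac : c = a <;> by_cases hbd : d = b <;>
      simp [Prod.ext_iff, hac, hbd] <;> tauto
  rw [h2]
  have h3 : (if r.1 < p.2 then (1:ℝ) else 0) = 1 - (if p.2 ≤ r.1 then 1 else 0) := by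
    rcases lt_or_ge r.1 p.2 with h | h
    · rw [if_pos h, if_neg (not_le.mpr h)]; ring
    · rw [if_neg (not_lt.mpr h), if_pos h]; ring
  rw [h3]; ring

def SS (q : ℝ) (N : ℕ) (l i : Fin N) : ℝ :=
  ∑ m : Fin N, (if m < l then (1:ℝ) else 0) * ((if pr m ≤ i then (1:ℝ) else 0) * (cc q N m * cc q N m))

lemma delta_comm {α : Type*} [DecidableEq α] (a b : α) :
    (if a = b then (1:ℝ) else 0) = if b = a then 1 else 0 := by
  by_cases h : a = b
  · rw [if_pos h, if_pos h.symm]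
  · rw [if_neg h, if_neg (fun e => h e.symm)]

lemma collapse {N : ℕ} (a b : Fin N) (g : Fin N × Fin N → ℝ) :
    ∑ s : Fin N × Fin N, (if s.1 = a then (1:ℝ) else 0) * ((if s.2 = b then (1:ℝ) else 0) * g s)
      = g (a, b) := by
  rw [Finset.sum_eq_single (a,b)]
  · simp
  · intro s _ hs
    rcases s with ⟨m,n⟩
    by_cases h1 : m = a
    · have h2 : n ≠ b := by rintro rfl; exact hs (by rw [h1])
      simp [h2]
    · simp [h1]
  · simp

lemma T7_sum (q : ℝ) {N : ℕ} (p r : Fin N × Fin N) :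
    ∑ s : Fin N × Fin N, ((if s.1 < p.2 then (1:ℝ) else 0) * ((if s.2 ≤ r.1 then (1:ℝ) else 0) *
        ((Cmat q N s.1 s.2 * Cmat q N p.1 p.2) * (Cmat q N r.1 r.2 * Cmat q N s.1 s.2))))
      = (Cmat q N p.1 p.2 * Cmat q N r.1 r.2) * SS q N p.2 r.1 := by
  rw [Fintype.sum_prod_type, SS, Finset.mul_sum]
  refine Finset.sum_congr rfl (fun m _ => ?_)
  rw [Finset.sum_eq_single (pr m)]
  · have : Cmat q N m (pr m) = cc q N m := by simp [Cmat, cc]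
    rw [this]; ring
  · intro n _ hn
    have : Cmat q N m n = 0 := by simp [Cmat, hn]
    rw [this]; ring
  · simp

lemma entry_formula (q : ℝ) {N : ℕ} (p r : Fin N × Fin N) :
    (Rhat q N * Rm q N) p r =
      q ^ (epsE p) * q ^ (epsE (p.2, p.1)) * ((if p.1 = r.1 then (1:ℝ) else 0) * (if p.2 = r.2 then (1:ℝ) else 0))
      - (q - q⁻¹) * q ^ (epsE p) * (if p.1 ≤ r.1 then (1:ℝ) else 0) *
          ((if p.2 = r.1 then (1:ℝ) else 0) * (if p.1 = r.2 then (1:ℝ) else 0)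
            - Cmat q N r.1 r.2 * Cmat q N p.2 p.1)
      + (q - q⁻¹) * q ^ (epsE (r.2, r.1)) * (if r.2 < p.2 then (1:ℝ) else 0) *
          ((if r.2 = p.1 then (1:ℝ) else 0) * (if r.1 = p.2 then (1:ℝ) else 0)
            - Cmat q N r.2 r.1 * Cmat q N p.1 p.2)
      - (q - q⁻¹)^2 *
          ( (if p.1 < p.2 then (1:ℝ) else 0) * (if p.2 ≤ r.1 then (1:ℝ) else 0) *
              ((if p.1 = r.1 then (1:ℝ) else 0) * (if p.2 = r.2 then (1:ℝ) else 0))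
            - (if p.1 < p.2 then (1:ℝ) else 0) * (if p.2 ≤ r.1 then (1:ℝ) else 0) *
                (Cmat q N r.1 r.2 * Cmat q N p.1 p.2)
            - (if r.1 < p.2 then (1:ℝ) else 0) * (if r.2 ≤ r.1 then (1:ℝ) else 0) *
                (Cmat q N r.1 r.2 * Cmat q N p.1 p.2)
            + (Cmat q N p.1 p.2 * Cmat q N r.1 r.2) * SS q N p.2 r.1 ) := by
  rw [Matrix.mul_apply]
  have hsummand : ∀ s : Fin N × Fin N, Rhat q N p s * Rm q N s r =
      ((if s.1 = p.2 then (1:ℝ) else 0) * ((if s.2 = p.1 then (1:ℝ) else 0) *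
        (q ^ (epsE p) * q ^ (epsE s) * ((if s.2 = r.1 then (1:ℝ) else 0) * (if s.1 = r.2 then (1:ℝ) else 0)))))
      + ((if s.1 = p.2 then (1:ℝ) else 0) * ((if s.2 = p.1 then (1:ℝ) else 0) *
          (-((q - q⁻¹) * q ^ (epsE p)) * (if s.2 ≤ r.1 then (1:ℝ) else 0) *
            ((if s.1 = r.1 then (1:ℝ) else 0) * (if s.2 = r.2 then (1:ℝ) else 0)
              - Cmat q N r.1 r.2 * Cmat q N s.1 s.2))))
      + ((if s.1 = r.2 then (1:ℝ) else 0) * ((if s.2 = r.1 then (1:ℝ) else 0) *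
          ((q - q⁻¹) * q ^ (epsE s) * (if s.1 < p.2 then (1:ℝ) else 0) *
            ((if s.1 = p.1 then (1:ℝ) else 0) * (if s.2 = p.2 then (1:ℝ) else 0)
              - Cmat q N s.1 s.2 * Cmat q N p.1 p.2))))
      + ((if s.1 = p.1 then (1:ℝ) else 0) * ((if s.2 = p.2 then (1:ℝ) else 0) *
          (-((q - q⁻¹)^2) * ((if s.1 < p.2 then (1:ℝ) else 0) * ((if s.2 ≤ r.1 then (1:ℝ) else 0) *
            ((if s.1 = r.1 then (1:ℝ) else 0) * (if s.2 = r.2 then (1:ℝ) else 0)))))))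
      + ((if s.1 = p.1 then (1:ℝ) else 0) * ((if s.2 = p.2 then (1:ℝ) else 0) *
          ((q - q⁻¹)^2 * ((if s.1 < p.2 then (1:ℝ) else 0) * ((if s.2 ≤ r.1 then (1:ℝ) else 0) *
            (Cmat q N r.1 r.2 * Cmat q N s.1 s.2))))))
      + ((if s.1 = r.1 then (1:ℝ) else 0) * ((if s.2 = r.2 then (1:ℝ) else 0) *
          ((q - q⁻¹)^2 * ((if s.1 < p.2 then (1:ℝ) else 0) * ((if s.2 ≤ r.1 then (1:ℝ) else 0) *
            (Cmat q N s.1 s.2 * Cmat q N p.1 p.2))))))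
      + (-((q - q⁻¹)^2)) * ((if s.1 < p.2 then (1:ℝ) else 0) * ((if s.2 ≤ r.1 then (1:ℝ) else 0) *
            ((Cmat q N s.1 s.2 * Cmat q N p.1 p.2) * (Cmat q N r.1 r.2 * Cmat q N s.1 s.2)))) := by
    intro s
    rw [Rhat_apply, Rm_apply, delta_comm r.1 s.2, delta_comm r.2 s.1, delta_comm r.1 s.1,
      delta_comm r.2 s.2]
    simp only [Kmat]
    ring
  rw [Finset.sum_congr rfl (fun s _ => hsummand s)]
  simp only [Finset.sum_add_distrib]
  rw [collapse p.2 p.1, collapse p.2 p.1, collapse r.2 r.1, collapse p.1 p.2, collapse p.1 p.2,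
    collapse r.1 r.2, ← Finset.mul_sum, T7_sum q p r]
  ring

lemma pr_le_iff {N : ℕ} (m i : Fin N) : pr m ≤ i ↔ pr i ≤ m := by
  constructor
  · intro h
    have := Fin.rev_le_rev.mpr h
    rw [pr] at *; rwa [Fin.rev_rev] at this
  · intro h
    have := Fin.rev_le_rev.mpr h
    rw [pr] at *; rwa [Fin.rev_rev] at this

lemma pr_lt_iff {N : ℕ} (m i : Fin N) : pr m < i ↔ pr i < m := by
  constructor
  · intro h
    have := Fin.rev_lt_rev.mpr h
    rw [pr] at *; rwa [Fin.rev_rev] at this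
  · intro h
    have := Fin.rev_lt_rev.mpr h
    rw [pr] at *; rwa [Fin.rev_rev] at this

lemma SS_eq_Ico (q : ℝ) {N : ℕ} (l i : Fin N) :
    SS q N l i = ∑ m ∈ Finset.Ico ((pr i : Fin N) : ℕ) (l : ℕ), ccsq q N m := by
  rw [SS]
  have h1 : ∀ m : Fin N,
      (if m < l then (1:ℝ) else 0) * ((if pr m ≤ i then (1:ℝ) else 0) * (cc q N m * cc q N m))
        = (fun t : ℕ => if ((pr i : Fin N) : ℕ) ≤ t ∧ t < (l:ℕ) then ccsq q N t else 0) (m : ℕ) := by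
    intro m
    simp only []
    by_cases hml : m < l
    · by_cases hpm : pr m ≤ i
      · rw [if_pos hml, if_pos hpm,
          if_pos ⟨Fin.le_def.mp ((pr_le_iff m i).mp hpm), Fin.lt_def.mp hml⟩]
        rw [ccsq, dif_pos m.isLt]
        simp [Fin.eta]
      · have hn : ¬(((pr i : Fin N) : ℕ) ≤ (m:ℕ) ∧ (m:ℕ) < (l:ℕ)) := by
          intro hcc
          exact hpm ((pr_le_iff m i).mpr (Fin.le_def.mpr hcc.1))
        rw [if_pos hml, if_neg hpm, if_neg hn]
        ring
    · have hn : ¬(((pr i : Fin N) : ℕ) ≤ (m:ℕ) ∧ (m:ℕ) < (l:ℕ)) := by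
        intro hcc
        exact hml (Fin.lt_def.mpr hcc.2)
      rw [if_neg hml, if_neg hn]
      ring
  rw [Finset.sum_congr rfl (fun m _ => h1 m),
    Fin.sum_univ_eq_sum_range (fun t => if ((pr i : Fin N) : ℕ) ≤ t ∧ t < (l:ℕ) then ccsq q N t else 0) N,
    ← Finset.sum_filter]
  congr 1
  ext t
  simp only [Finset.mem_filter, Finset.mem_range, Finset.mem_Ico]
  have := l.isLt
  omega

lemma SS_zero (q : ℝ) {N : ℕ} {l i : Fin N} (h : l ≤ pr i) : SS q N l i = 0 := by
  rw [SS]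
  refine Finset.sum_eq_zero (fun m _ => ?_)
  by_cases hml : m < l
  · rw [if_neg (fun hpm => absurd ((pr_le_iff m i).mp hpm) (not_le.mpr (lt_of_lt_of_le hml h)))]
    ring
  · rw [if_neg hml]; ring

lemma Cmat_self (q : ℝ) {N : ℕ} (i : Fin N) : Cmat q N i (pr i) = cc q N i := by
  simp [Cmat, cc]

lemma Cmat_ne (q : ℝ) {N : ℕ} {i j : Fin N} (h : j ≠ pr i) : Cmat q N i j = 0 := by
  simp [Cmat, h]

lemma cc_rev_inv {q : ℝ} (hq : 0 < q) {N : ℕ} (i : Fin N) :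
    cc q N (pr i) = (cc q N i)⁻¹ := by
  have h := cc_mul_rev hq i
  have h2 := cc_pos hq (N := N) i
  field_simp at h ⊢
  linarith [h]


lemma pr_swap_iff {N : ℕ} (a b : Fin N) : b = pr a ↔ a = pr b :=
  ⟨fun h => by rw [h, pr_pr], fun h => by rw [h, pr_pr]⟩

lemma epsE_swap {N : ℕ} (a b : Fin N) : epsE ((b, a) : Fin N × Fin N) = epsE (a, b) := by
  unfold epsE
  have h1 : (if b = a then (1:ℤ) else 0) = if a = b then 1 else 0 :=
    if_congr eq_comm rfl rfl
  have h2 : (if b = pr a then (1:ℤ) else 0) = if a = pr b then 1 else 0 :=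
    if_congr (pr_swap_iff a b) rfl rfl
  exact congrArg₂ (· - ·) h1 h2

lemma prod_lt_le {N : ℕ} (a b : Fin N) (x : ℝ) :
    (if a < b then (1:ℝ) else 0) * ((if b ≤ a then (1:ℝ) else 0) * x) = 0 := by
  by_cases h : a < b
  · rw [if_neg (not_le.mpr h)]; ring
  · rw [if_neg h]; ring

lemma key_exp {q : ℝ} (hq : 0 < q) {N : ℕ} (k : Fin N) :
    (cc q N k * cc q N k) * gfun q N ((pr k : Fin N) : ℕ)
      = q ^ (((if k = pr k then 1 else 0) : ℤ) - 1) := by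
  have hv := pr_val k
  have hk := k.isLt
  have hiff : k = pr k ↔ (k : ℕ) = ((pr k : Fin N) : ℕ) :=
    ⟨fun h => by rw [← h], fun h => Fin.ext h⟩
  rw [cc_sq hq, gfun, ← zpow_add₀ (ne_of_gt hq)]
  congr 1
  unfold csqExp gExp
  by_cases hm : k = pr k
  · rw [if_pos hm]
    rw [hiff] at hm
    split_ifs <;> omega
  · rw [if_neg hm]
    rw [hiff] at hm
    split_ifs <;> omega

lemma entry_eq_delta {q : ℝ} (hq : 0 < q) {N : ℕ} (p r : Fin N × Fin N) :
    (Rhat q N * Rm q N) p r = (1 : Matrix (Fin N × Fin N) (Fin N × Fin N) ℝ) p r := by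
  have hq0 : q ≠ 0 := ne_of_gt hq
  rcases p with ⟨k, l⟩
  rcases r with ⟨i, j⟩
  rw [entry_formula, Matrix.one_apply]
  have hone : (if ((k,l) : Fin N × Fin N) = (i,j) then (1:ℝ) else 0)
      = (if k = i then (1:ℝ) else 0) * (if l = j then (1:ℝ) else 0) := by
    by_cases h1 : k = i <;> by_cases h2 : l = j <;>
      simp [Prod.ext_iff, h1, h2]
  rw [hone]
  dsimp only
  by_cases hC : j = pr i ∧ l = pr k
  · obtain ⟨hj, hl⟩ := hC
    subst hj
    subst hl
    have hCi : Cmat q N i (pr i) = cc q N i := Cmat_self q i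
    have hCk : Cmat q N k (pr k) = cc q N k := Cmat_self q k
    have hCpk : Cmat q N (pr k) k = cc q N (pr k) := by
      have h := Cmat_self q (pr k); rwa [pr_pr] at h
    have hCpi : Cmat q N (pr i) i = cc q N (pr i) := by
      have h := Cmat_self q (pr i); rwa [pr_pr] at h
    rw [hCi, hCk, hCpk, hCpi]
    have hx : (0:ℝ) < cc q N i := cc_pos hq i
    have hy : (0:ℝ) < cc q N k := cc_pos hq k
    have hxz : cc q N i * cc q N (pr i) = 1 := cc_mul_rev hq i
    have hyw : cc q N k * cc q N (pr k) = 1 := cc_mul_rev hq k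
    have hdpr : (if pr k = pr i then (1:ℝ) else 0) = if k = i then 1 else 0 :=
      if_congr ⟨fun h => by have h2 := congrArg pr h; rwa [pr_pr, pr_pr] at h2,
        fun h => by rw [h]⟩ rfl rfl
    rw [hdpr]
    have he1 : epsE ((k, pr k) : Fin N × Fin N) = (if k = pr k then 1 else 0) - 1 := by
      unfold epsE
      rw [if_pos (pr_pr k).symm]
    have he2 : epsE ((pr i, i) : Fin N × Fin N) = (if i = pr i then 1 else 0) - 1 := by
      unfold epsE
      have hc1 : (if pr i = i then (1:ℤ) else 0) = if i = pr i then 1 else 0 :=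
        if_congr eq_comm rfl rfl
      rw [if_pos rfl, hc1]
    have he3 : epsE ((pr k, k) : Fin N × Fin N) = (if k = pr k then 1 else 0) - 1 := by
      unfold epsE
      have hc1 : (if pr k = k then (1:ℤ) else 0) = if k = pr k then 1 else 0 :=
        if_congr eq_comm rfl rfl
      rw [if_pos rfl, hc1]
    rw [he1, he2, he3]
    by_cases hki : k = i
    · subst hki
      rw [SS_zero q (le_refl (pr k))]
      have hplz : (if k < pr k then (1:ℝ) else 0) * (if pr k ≤ k then 1 else 0) = 0 := by
        by_cases h : k < pr k
        · rw [if_neg (not_le.mpr h)]; ring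
        · rw [if_neg h]; ring
      rw [hplz]
      have hlt0 : (if pr k < pr k then (1:ℝ) else 0) = 0 := if_neg (lt_irrefl _)
      rw [hlt0]
      by_cases hm : k = pr k
      · rw [if_pos hm]
        have hm2 : (if pr k = k then (1:ℝ) else 0) = 1 := if_pos hm.symm
        have hm3 : (if k = pr k then (1:ℝ) else 0) = 1 := if_pos hm
        rw [hm2, hm3, hyw]
        norm_num
      · rw [if_neg hm]
        have hm2 : (if pr k = k then (1:ℝ) else 0) = 0 := if_neg (fun h => hm h.symm)
        have hm3 : (if k = pr k then (1:ℝ) else 0) = 0 := if_neg hm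
        rw [hm2, hm3, hyw]
        have hval : ((0:ℤ) - 1) = -1 := by ring
        rw [hval, _root_.zpow_neg, zpow_one]
        have hii : (if k = k then (1:ℝ) else 0) = 1 := if_pos rfl
        rw [hii]
        have hle : (if k ≤ k then (1:ℝ) else 0) = 1 := if_pos (le_refl k)
        rw [hle]
        field_simp
        ring
    · have hd0 : (if k = i then (1:ℝ) else 0) = 0 := if_neg hki
      rw [hd0]
      rcases lt_or_gt_of_ne hki with hlt | hgt
      · -- k < i : main case
        have hle1 : (if k ≤ i then (1:ℝ) else 0) = 1 := if_pos hlt.le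
        have hlt3 : (if pr i < pr k then (1:ℝ) else 0) = 1 := by
          refine if_pos ?_
          exact Fin.rev_lt_rev.mpr hlt
        rw [hle1, hlt3]
        have hab : ((pr i : Fin N) : ℕ) ≤ ((pr k : Fin N) : ℕ) :=
          Fin.le_def.mp (Fin.rev_le_rev.mpr hlt.le)
        have hSS := tele hq ((pr i : Fin N) : ℕ) ((pr k : Fin N) : ℕ) hab
          (le_of_lt (pr k).isLt)
        rw [← SS_eq_Ico] at hSS
        have hK1 := key_exp hq k
        have hK2 := key_exp hq i
        have hJ : (if k < pr k then (1:ℝ) else 0) * (if pr k ≤ i then 1 else 0)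
            + (if i < pr k then 1 else 0) * (if pr i ≤ i then 1 else 0)
            = if 2 * ((pr i : Fin N) : ℕ) + 1 ≤ N ∧ N ≤ 2 * ((pr k : Fin N) : ℕ)
                then 1 else 0 := by
          have hv1 := pr_val k
          have hv2 := pr_val i
          have hik := Fin.lt_def.mp hlt
          have hkN := k.isLt
          have hiN := i.isLt
          simp only [Fin.lt_def, Fin.le_def]
          split_ifs <;> first | (exfalso; omega) | norm_num
        by_cases hD : i = pr k
        · subst hD
          rw [pr_pr] at hSS hK2 hJ hxz ⊢
          have hm0 : ¬ k = pr k := fun h => hki (by rw [← h])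
          have hmi : (if pr k = k then (1:ℤ) else 0) = 0 := if_neg (fun h => hm0 h.symm)
          have hmk : (if k = pr k then (1:ℤ) else 0) = 0 := if_neg hm0
          rw [hmk] at hK1 ⊢
          rw [hmi] at hK2 ⊢
          have hd2 : (if pr k = pr k then (1:ℝ) else 0) = 1 := if_pos rfl
          have hd3 : (if k = k then (1:ℝ) else 0) = 1 := if_pos rfl
          rw [hd2, hd3]
          -- hxz : cc (pr k) * cc k = 1 ; hyw : cc k * cc (pr k) = 1
          linear_combination
            (-((q - q⁻¹) * cc q N (pr k) * cc q N k)) * hSS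
            + ((q - q⁻¹)^2 * cc q N (pr k) * cc q N k) * hJ
            + (-((q - q⁻¹) * cc q N (pr k) * cc q N (pr k))) * hK1
            + ((q - q⁻¹) * cc q N k * cc q N k) * hK2
            + ((q - q⁻¹) * cc q N (pr k) * cc q N k * gfun q N ((pr k : Fin N) : ℕ)) * hyw
            + (-((q - q⁻¹) * cc q N (pr k) * cc q N k * gfun q N ((k : Fin N) : ℕ))) * hxz
        · have hd2 : (if pr k = i then (1:ℝ) else 0) = 0 := if_neg (fun h => hD h.symm)
          have hd3 : (if k = pr i then (1:ℝ) else 0) = 0 :=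
            if_neg (fun h => hD ((pr_swap_iff i k).mp h))
          have hd4 : (if pr i = k then (1:ℝ) else 0) = 0 :=
            if_neg (fun h => hD ((pr_swap_iff i k).mp h.symm))
          have hd5 : (if i = pr k then (1:ℝ) else 0) = 0 := if_neg hD
          rw [hd2, hd3, hd4, hd5]
          linear_combination
            (-((q - q⁻¹) * cc q N i * cc q N k)) * hSS
            + ((q - q⁻¹)^2 * cc q N i * cc q N k) * hJ
            + (-((q - q⁻¹) * cc q N i * cc q N (pr k))) * hK1
            + ((q - q⁻¹) * cc q N (pr i) * cc q N k) * hK2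
            + ((q - q⁻¹) * cc q N i * cc q N k * gfun q N ((pr k : Fin N) : ℕ)) * hyw
            + (-((q - q⁻¹) * cc q N i * cc q N k * gfun q N ((pr i : Fin N) : ℕ))) * hxz
      · -- i < k : everything vanishes
        have hle0 : (if k ≤ i then (1:ℝ) else 0) = 0 := if_neg (not_le.mpr hgt)
        have hlt0 : (if pr i < pr k then (1:ℝ) else 0) = 0 :=
          if_neg (fun h => lt_asymm hgt (Fin.rev_lt_rev.mp h))
        have hp1 : (if k < pr k then (1:ℝ) else 0) * (if pr k ≤ i then 1 else 0) = 0 := by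
          by_cases h : k < pr k
          · rw [if_neg (fun hle : pr k ≤ i => lt_asymm h (lt_of_le_of_lt hle hgt))]
            ring
          · rw [if_neg h]; ring
        have hp2 : (if i < pr k then (1:ℝ) else 0) * (if pr i ≤ i then 1 else 0) = 0 := by
          by_cases h : i < pr k
          · have hki2 : k < pr i := by
              have := Fin.rev_lt_rev.mpr h
              rw [pr] at this ⊢
              rwa [Fin.rev_rev] at this
            rw [if_neg (fun hle : pr i ≤ i => lt_asymm hgt (lt_of_lt_of_le hki2 hle))]
            ring
          · rw [if_neg h]; ring
        have hS0 : SS q N (pr k) i = 0 := SS_zero q (Fin.rev_le_rev.mpr hgt.le)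
        rw [hle0, hlt0, hp1, hp2, hS0]
        ring
  · -- C-products vanish
    have hzero : Cmat q N i j * Cmat q N l k = 0 ∧ Cmat q N j i * Cmat q N k l = 0
        ∧ Cmat q N i j * Cmat q N k l = 0 ∧ Cmat q N k l * Cmat q N i j = 0 := by
      by_cases hji : j = pr i
      · have hlk : l ≠ pr k := fun h => hC ⟨hji, h⟩
        have e1 : Cmat q N l k = 0 := Cmat_ne q (fun h => hlk ((pr_swap_iff l k).mp h))
        have e2 : Cmat q N k l = 0 := Cmat_ne q hlk
        rw [e1, e2]
        refine ⟨by ring, by ring, by ring, by ring⟩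
      · have e1 : Cmat q N i j = 0 := Cmat_ne q hji
        have e2 : Cmat q N j i = 0 := Cmat_ne q (fun h => hji ((pr_swap_iff j i).mp h))
        rw [e1, e2]
        refine ⟨by ring, by ring, by ring, by ring⟩
    obtain ⟨hz1, hz2, hz3, hz4⟩ := hzero
    rw [hz1, hz2, hz3, hz4]
    by_cases h1 : k = i
    · subst h1
      by_cases h2 : l = j
      · subst h2
        rw [epsE_swap k l]
        by_cases h3 : k = l
        · subst h3
          have he : epsE ((k,k) : Fin N × Fin N) = 1 := by
            unfold epsE
            rw [if_pos rfl, if_neg (fun h => hC ⟨h, h⟩)]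
            ring
          rw [he]
          simp only [if_pos rfl, le_refl, if_pos (le_refl k), lt_irrefl,
            if_neg (lt_irrefl k), zpow_one]
          field_simp
          simp only [↓reduceIte]
          ring
        · have he : epsE ((k,l) : Fin N × Fin N) = 0 := by
            unfold epsE
            rw [if_neg h3,
              if_neg (fun h => hC ⟨(pr_swap_iff l k).mp h, (pr_swap_iff l k).mp h⟩)]
            ring
          rw [he]
          have hlk0 : (if l = k then (1:ℝ) else 0) = 0 := if_neg (fun h => h3 h.symm)
          have hkl0 : (if k = l then (1:ℝ) else 0) = 0 := if_neg h3
          rw [hlk0, hkl0]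
          have h4 : (if k < l then (1:ℝ) else 0) * ((if l ≤ k then (1:ℝ) else 0) *
              ((if k = k then (1:ℝ) else 0) * (if l = l then (1:ℝ) else 0))) = 0 :=
            prod_lt_le k l _
          rw [mul_assoc ((if k < l then (1:ℝ) else 0)), h4]
          simp only [if_pos rfl, zpow_zero]
          ring
      · -- k = i, l ≠ j : target 0
        have hd1 : (if l = j then (1:ℝ) else 0) = 0 := if_neg (fun h => h2 h)
        rw [hd1]
        have hbr2 : (if l = k then (1:ℝ) else 0) * (if k = j then (1:ℝ) else 0) - 0 = 0 := by
          by_cases ha : l = k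
          · by_cases hb : k = j
            · exact absurd (ha.trans hb) h2
            · rw [if_neg hb]; ring
          · rw [if_neg ha]; ring
        have hbr3 : (if j = k then (1:ℝ) else 0) * (if k = l then (1:ℝ) else 0) - 0 = 0 := by
          by_cases ha : j = k
          · by_cases hb : k = l
            · exact absurd (ha.trans hb) (fun h => h2 h.symm)
            · rw [if_neg hb]; ring
          · rw [if_neg ha]; ring
        rw [hbr2, hbr3]
        ring
    · -- k ≠ i
      have hd1 : (if k = i then (1:ℝ) else 0) = 0 := if_neg h1
      rw [hd1]
      by_cases h4 : l = i ∧ k = j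
      · obtain ⟨h4a, h4b⟩ := h4
        subst h4a
        subst h4b
        -- now i := l, j := k (vars l k remain)
        have he : (if k ≤ l then (1:ℝ) else 0) = (if k < l then (1:ℝ) else 0) :=
          if_congr ⟨fun h => lt_of_le_of_ne h (fun e => h1 e), le_of_lt⟩ rfl rfl
        rw [he]
        simp only [if_pos rfl]
        ring
      · have hbr2 : (if l = i then (1:ℝ) else 0) * (if k = j then (1:ℝ) else 0) - 0 = 0 := by
          by_cases ha : l = i
          · by_cases hb : k = j
            · exact absurd ⟨ha, hb⟩ h4
            · rw [if_neg hb]; ring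
          · rw [if_neg ha]; ring
        have hbr3 : (if j = k then (1:ℝ) else 0) * (if i = l then (1:ℝ) else 0) - 0 = 0 := by
          by_cases ha : j = k
          · by_cases hb : i = l
            · exact absurd ⟨hb.symm, ha.symm⟩ h4
            · rw [if_neg hb]; ring
          · rw [if_neg ha]; ring
        rw [hbr2, hbr3]
        ring

lemma Cmat_inv {q : ℝ} (hq : 0 < q) {N : ℕ} (a b : Fin N) :
    Cmat q⁻¹ N a b = Cmat q N b a := by
  unfold Cmat
  by_cases h : b = pr a
  · rw [if_pos h, if_pos ((pr_swap_iff a b).mp h)]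
    subst h
    rw [rho_rev]
    simp only [Real.rpow_eq_pow]
    rw [neg_neg, Real.inv_rpow hq.le, ← Real.rpow_neg hq.le, neg_neg]
  · rw [if_neg h, if_neg (fun h2 => h ((pr_swap_iff b a).mp h2))]

lemma prod_delta_zero {N : ℕ} {a b c d : Fin N} (h : ¬(a = b ∧ c = d)) :
    (if a = b then (1:ℝ) else 0) * (if c = d then (1:ℝ) else 0) = 0 := by
  by_cases h1 : a = b
  · by_cases h2 : c = d
    · exact absurd ⟨h1, h2⟩ h
    · rw [if_neg h2]; ring
  · rw [if_neg h1]; ring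

lemma flip_lemma {q : ℝ} (hq : 0 < q) {N : ℕ} (p r : Fin N × Fin N) :
    Rm q N p r = Rhat q⁻¹ N (p.2, p.1) (r.2, r.1) := by
  rcases p with ⟨k, l⟩
  rcases r with ⟨i, j⟩
  rw [Rm_apply, Rhat_apply]
  dsimp only
  have hKeq : Kmat q⁻¹ N (l,k) (j,i) = Kmat q N (k,l) (i,j) := by
    unfold Kmat
    dsimp only
    rw [Cmat_inv hq, Cmat_inv hq]
  rw [hKeq]
  have hw : q⁻¹ - q⁻¹⁻¹ = -(q - q⁻¹) := by rw [inv_inv]; ring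
  rw [hw]
  rw [epsE_swap k l]
  have hzi : (q⁻¹) ^ (epsE ((k,l) : Fin N × Fin N)) = (q ^ (epsE ((k,l) : Fin N × Fin N)))⁻¹ :=
    inv_zpow q _
  rw [hzi]
  by_cases hd : i = l ∧ j = k
  · obtain ⟨h1, h2⟩ := hd
    subst h1
    subst h2
    -- now l ↦ i, k ↦ j
    rw [if_pos (le_refl i), if_neg (lt_irrefl j)]
    by_cases hm1 : j = i
    · subst hm1
      -- all indices j
      by_cases hm2 : j = pr j
      · have he : epsE ((j,j) : Fin N × Fin N) = 0 := by
          unfold epsE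
          rw [if_pos rfl, if_pos hm2]
          ring
        rw [he, zpow_zero]
        have hK1 : Kmat q N (j,j) (j,j) = 1 := by
          unfold Kmat
          dsimp only
          have h3 : Cmat q N j j = cc q N j := by
            unfold Cmat cc
            rw [if_pos hm2]
          rw [h3]
          have h4 := cc_mul_rev hq j
          rw [← hm2] at h4
          exact h4
        rw [hK1, if_pos rfl]
        norm_num
      · have he : epsE ((j,j) : Fin N × Fin N) = 1 := by
          unfold epsE
          rw [if_pos rfl, if_neg hm2]
          ring
        rw [he, zpow_one]
        have hK0 : Kmat q N (j,j) (j,j) = 0 := by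
          unfold Kmat
          dsimp only
          rw [Cmat_ne q hm2]
          ring
        rw [hK0, if_pos rfl]
        field_simp
        ring
    · have hij0 : (if i = j then (1:ℝ) else 0) = 0 := if_neg (fun h => hm1 h.symm)
      have hji0 : (if j = i then (1:ℝ) else 0) = 0 := if_neg hm1
      rw [hij0, hji0]
      by_cases hm2 : i = pr j
      · have he : epsE ((j,i) : Fin N × Fin N) = 0 - 1 := by
          unfold epsE
          rw [if_neg hm1, if_pos ((pr_swap_iff j i).mp hm2)]
        rw [he]
        have hK1 : Kmat q N (j,i) (i,j) = 1 := by
          unfold Kmat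
          dsimp only
          have c1 : Cmat q N i j = cc q N i := by
            have h3 := Cmat_self q i
            rwa [show pr i = j from by rw [hm2, pr_pr]] at h3
          have c2 : Cmat q N j i = cc q N j := by
            rw [hm2]
            exact Cmat_self q j
          rw [c1, c2, hm2]
          have h4 := cc_mul_rev hq j
          linarith [h4]
        rw [hK1]
        have hv : ((0:ℤ) - 1) = -1 := by ring
        rw [hv, _root_.zpow_neg, zpow_one, inv_inv]
        field_simp
        simp only [↓reduceIte]
        ring
      · have he : epsE ((j,i) : Fin N × Fin N) = 0 := by
          unfold epsE
          rw [if_neg hm1, if_neg (fun h => hm2 ((pr_swap_iff i j).mp h))]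
          ring
        rw [he, zpow_zero]
        have hK0 : Kmat q N (j,i) (i,j) = 0 := by
          unfold Kmat
          dsimp only
          rw [Cmat_ne q hm2]
          ring
        rw [hK0]
        norm_num
  · have hz1 : (if i = l then (1:ℝ) else 0) * (if j = k then (1:ℝ) else 0) = 0 :=
      prod_delta_zero hd
    have hz2 : (if j = k then (1:ℝ) else 0) * (if i = l then (1:ℝ) else 0) = 0 :=
      prod_delta_zero (fun h => hd ⟨h.2, h.1⟩)
    have hmain0 : ((if l ≤ i then (1:ℝ) else 0) - (if j < k then (1:ℝ) else 0))
        * ((if i = k then (1:ℝ) else 0) * (if j = l then (1:ℝ) else 0)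
            - Kmat q N (k,l) (i,j)) = 0 := by
      by_cases hB1 : i = k ∧ j = l
      · obtain ⟨h1, h2⟩ := hB1
        have hlk : ¬ l = k := fun h => hd ⟨h1.trans h.symm, h2.trans h⟩
        have e1 : (if l ≤ i then (1:ℝ) else 0) = if l < i then 1 else 0 :=
          if_congr ⟨fun hh => lt_of_le_of_ne hh (fun e => hlk (e.trans h1)),
            le_of_lt⟩ rfl rfl
        have e2 : (if j < k then (1:ℝ) else 0) = if l < i then 1 else 0 :=
          if_congr (by rw [h2, ← h1]) rfl rfl
        rw [e1, e2]
        ring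
      · have hz3 : (if i = k then (1:ℝ) else 0) * (if j = l then (1:ℝ) else 0) = 0 :=
          prod_delta_zero hB1
        rw [hz3]
        by_cases hB2 : j = pr i ∧ l = pr k
        · obtain ⟨hb1, hb2⟩ := hB2
          have hipr : ¬ i = pr k := by
            intro h
            exact hd ⟨h.trans hb2.symm, by rw [hb1, h, pr_pr]⟩
          have e1 : (if l ≤ i then (1:ℝ) else 0) = if pr k < i then 1 else 0 := by
            refine if_congr ?_ rfl rfl
            rw [hb2]
            exact ⟨fun hh => lt_of_le_of_ne hh (fun e => hipr e.symm), le_of_lt⟩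
          have e2 : (if j < k then (1:ℝ) else 0) = if pr k < i then 1 else 0 := by
            refine if_congr ?_ rfl rfl
            rw [hb1]
            exact pr_lt_iff i k
          rw [e1, e2]
          ring
        · have hK0 : Kmat q N (k, l) (i, j) = 0 := by
            unfold Kmat
            dsimp only
            by_cases hji : j = pr i
            · have hlk2 : l ≠ pr k := fun h => hB2 ⟨hji, h⟩
              rw [Cmat_ne q hlk2]
              ring
            · rw [Cmat_ne q hji]
              ring
          rw [hK0]
          ring
    linear_combination (q ^ (epsE ((k,l) : Fin N × Fin N))) * hz1
      - (q ^ (epsE ((k,l) : Fin N × Fin N)))⁻¹ * hz2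
      - (q - q⁻¹) * hmain0

def flipM {N : ℕ} (M : Matrix (Fin N × Fin N) (Fin N × Fin N) ℝ) :
    Matrix (Fin N × Fin N) (Fin N × Fin N) ℝ :=
  fun p r => M (p.2, p.1) (r.2, r.1)

lemma flipM_mul {N : ℕ} (A B : Matrix (Fin N × Fin N) (Fin N × Fin N) ℝ) :
    flipM (A * B) = flipM A * flipM B := by
  ext p r
  rw [flipM, Matrix.mul_apply, Matrix.mul_apply]
  exact Fintype.sum_equiv (Equiv.prodComm (Fin N) (Fin N)) _ _ (fun s => rfl)

lemma flipM_one {N : ℕ} : flipM (1 : Matrix (Fin N × Fin N) (Fin N × Fin N) ℝ) = 1 := by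
  ext p r
  rw [flipM, Matrix.one_apply, Matrix.one_apply]
  refine if_congr ?_ rfl rfl
  rw [Prod.ext_iff, Prod.ext_iff]
  dsimp only
  tauto

lemma flip_Rhat {q : ℝ} (hq : 0 < q) {N : ℕ} :
    flipM (Rhat q⁻¹ N) = Rm q N := by
  ext p r
  rw [flipM]
  exact (flip_lemma hq p r).symm

lemma flip_Rm {q : ℝ} (hq : 0 < q) {N : ℕ} :
    flipM (Rm q⁻¹ N) = Rhat q N := by
  ext ⟨k, l⟩ ⟨i, j⟩
  rw [flipM]
  dsimp only
  rw [flip_lemma (inv_pos.mpr hq) ((l,k) : Fin N × Fin N) ((j,i) : Fin N × Fin N)]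
  dsimp only
  rw [inv_inv]

theorem Rm_inverse (q : ℝ) (hq : 0 < q) (hq1 : q ≠ 1) (N : ℕ) (hN : 3 ≤ N) :
    Rhat q N * Rm q N = 1 ∧ Rm q N * Rhat q N = 1 := by
  have hmain : ∀ q' : ℝ, 0 < q' → Rhat q' N * Rm q' N = 1 := by
    intro q' hq'
    ext p r
    exact entry_eq_delta hq' p r
  refine ⟨hmain q hq, ?_⟩
  have hinv : (0:ℝ) < q⁻¹ := inv_pos.mpr hq
  calc Rm q N * Rhat q N
      = flipM (Rhat q⁻¹ N) * flipM (Rm q⁻¹ N) := by rw [flip_Rhat hq, flip_Rm hq]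
    _ = flipM (Rhat q⁻¹ N * Rm q⁻¹ N) := (flipM_mul _ _).symm
    _ = flipM 1 := by rw [hmain q⁻¹ hinv]
    _ = 1 := flipM_one
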